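/- Define the Lipschitz constant L = max_s (v*(s) - T^{π₀}v*(s)). Then L ≥ 0 and the bias of the α-optimal value satisfies ‖v* - v*_α‖_∞ ≤ αL/(1-γ), where v*_α is the fixed point of T_α = (1-α)T + α T^{π₀}. -/
import Mathlib


open Finset

/-- One-step return for state `s`, action `a`, value `v`. -/
noncomputable def qOf {S A : Type*} [Fintype S] (γ : ℝ)
    (r : S → A → ℝ) (P : S → A → S → ℝ) (v : S → ℝ) (s : S) (a : A) : ℝ :=
  r s a + γ * ∑ s', P s a s' * v s'

/-- Fixed-policy Bellman operator. -/
noncomputable def Tpol {S A : Type*} [Fintype S] [Fintype A] (γ : ℝ)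
    (r : S → A → ℝ) (P : S → A → S → ℝ) (π : S → A → ℝ) (v : S → ℝ) : S → ℝ :=
  fun s => ∑ a, π s a * qOf γ r P v s a

/-- Optimal Bellman operator. -/
noncomputable def Topt {S A : Type*} [Fintype S] [Fintype A] (γ : ℝ)
    (r : S → A → ℝ) (P : S → A → S → ℝ) (v : S → ℝ) : S → ℝ :=
  fun s => ⨆ a : A, qOf γ r P v s a
/-- With `L = max_s (v*(s) - T^{π₀}v*(s))`, we have `L ≥ 0` and the
bias of the α-optimal value satisfies `‖v* - v*_α‖ ≤ αL/(1-γ)`, where `v*_α` is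
the fixed point of `T_α = (1-α)T + α T^{π₀}`. -/
theorem bias_bound
    {S A : Type*} [Fintype S] [Fintype A] [Nonempty S] [Nonempty A]
    (γ α : ℝ) (hγ0 : 0 ≤ γ) (hγ1 : γ < 1) (hα : α ∈ Set.Icc (0 : ℝ) 1)
    (r : S → A → ℝ) (P : S → A → S → ℝ) (π0 : S → A → ℝ)
    (hP : ∀ s a, (∀ s', 0 ≤ P s a s') ∧ ∑ s', P s a s' = 1)
    (hπ0 : ∀ s, (∀ a, 0 ≤ π0 s a) ∧ ∑ a, π0 s a = 1)
    (vstar vα : S → ℝ)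
    (hstar : Topt γ r P vstar = vstar)
    (hvα : (fun s => (1 - α) * Topt γ r P vα s + α * Tpol γ r P π0 vα s) = vα)
    (L : ℝ) (hL : L = ⨆ s : S, (vstar s - Tpol γ r P π0 vstar s)) :
    0 ≤ L ∧ ‖vstar - vα‖ ≤ α * L / (1 - γ) := by
  obtain ⟨hα0, hα1⟩ := hα
  set D := ‖vstar - vα‖ with hD
  have hD0 : 0 ≤ D := norm_nonneg _
  have hpt : ∀ s' : S, |vstar s' - vα s'| ≤ D := by
    intro s'
    have := norm_le_pi_norm (vstar - vα) s'
    simpa [Real.norm_eq_abs] using this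
  -- q contraction
  have hq : ∀ (s : S) (a : A), |qOf γ r P vstar s a - qOf γ r P vα s a| ≤ γ * D := by
    intro s a
    have heq : qOf γ r P vstar s a - qOf γ r P vα s a
        = γ * ∑ s', P s a s' * (vstar s' - vα s') := by
      simp only [qOf, mul_sub, Finset.mul_sum, Finset.sum_sub_distrib]
      ring
    rw [heq, abs_mul, abs_of_nonneg hγ0]
    have : |∑ s', P s a s' * (vstar s' - vα s')| ≤ D := by
      calc |∑ s', P s a s' * (vstar s' - vα s')|
          ≤ ∑ s', |P s a s' * (vstar s' - vα s')| := Finset.abs_sum_le_sum_abs _ _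
        _ ≤ ∑ s', P s a s' * D := by
            apply Finset.sum_le_sum
            intro s' _
            rw [abs_mul, abs_of_nonneg ((hP s a).1 s')]
            exact mul_le_mul_of_nonneg_left (hpt s') ((hP s a).1 s')
        _ = D := by rw [← Finset.sum_mul, (hP s a).2, one_mul]
    exact mul_le_mul_of_nonneg_left this hγ0
  have bdd : ∀ v : S → ℝ, ∀ s : S, BddAbove (Set.range fun a => qOf γ r P v s a) :=
    fun v s => Set.Finite.bddAbove (Set.finite_range _)
  -- Topt contraction (both directions)
  have hTopt1 : ∀ s, Topt γ r P vstar s - Topt γ r P vα s ≤ γ * D := by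
    intro s
    rw [sub_le_iff_le_add]
    apply ciSup_le
    intro a
    have h1 : qOf γ r P vstar s a ≤ qOf γ r P vα s a + γ * D := by
      have := (abs_le.mp (hq s a)).2; linarith
    have h2 : qOf γ r P vα s a ≤ Topt γ r P vα s := le_ciSup (bdd vα s) a
    linarith
  have hTopt2 : ∀ s, Topt γ r P vα s - Topt γ r P vstar s ≤ γ * D := by
    intro s
    rw [sub_le_iff_le_add]
    apply ciSup_le
    intro a
    have h1 : qOf γ r P vα s a ≤ qOf γ r P vstar s a + γ * D := by
      have := (abs_le.mp (hq s a)).1; linarith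
    have h2 : qOf γ r P vstar s a ≤ Topt γ r P vstar s := le_ciSup (bdd vstar s) a
    linarith
  -- Tpol contraction
  have hTpol : ∀ s, |Tpol γ r P π0 vstar s - Tpol γ r P π0 vα s| ≤ γ * D := by
    intro s
    have heq : Tpol γ r P π0 vstar s - Tpol γ r P π0 vα s
        = ∑ a, π0 s a * (qOf γ r P vstar s a - qOf γ r P vα s a) := by
      simp only [Tpol, Finset.sum_sub_distrib, mul_sub]
    rw [heq]
    calc |∑ a, π0 s a * (qOf γ r P vstar s a - qOf γ r P vα s a)|
        ≤ ∑ a, |π0 s a * (qOf γ r P vstar s a - qOf γ r P vα s a)| :=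
          Finset.abs_sum_le_sum_abs _ _
      _ ≤ ∑ a, π0 s a * (γ * D) := by
          apply Finset.sum_le_sum
          intro a _
          rw [abs_mul, abs_of_nonneg ((hπ0 s).1 a)]
          exact mul_le_mul_of_nonneg_left (hq s a) ((hπ0 s).1 a)
      _ = γ * D := by rw [← Finset.sum_mul, (hπ0 s).2, one_mul]
  -- Tpol ≤ Topt at vstar
  have hTT : ∀ s, Tpol γ r P π0 vstar s ≤ Topt γ r P vstar s := by
    intro s
    calc Tpol γ r P π0 vstar s = ∑ a, π0 s a * qOf γ r P vstar s a := rfl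
      _ ≤ ∑ a, π0 s a * Topt γ r P vstar s := by
          apply Finset.sum_le_sum
          intro a _
          exact mul_le_mul_of_nonneg_left (le_ciSup (bdd vstar s) a) ((hπ0 s).1 a)
      _ = Topt γ r P vstar s := by rw [← Finset.sum_mul, (hπ0 s).2, one_mul]
  have hvstar : ∀ s, Topt γ r P vstar s = vstar s := fun s => congrFun hstar s
  have bddL : BddAbove (Set.range fun s : S => vstar s - Tpol γ r P π0 vstar s) :=
    Set.Finite.bddAbove (Set.finite_range _)
  have hLge : ∀ s, vstar s - Tpol γ r P π0 vstar s ≤ L := by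
    intro s; rw [hL]; exact le_ciSup bddL s
  have hgap0 : ∀ s, 0 ≤ vstar s - Tpol γ r P π0 vstar s := by
    intro s; have := hTT s; rw [hvstar s] at this; linarith
  obtain ⟨s0⟩ := ‹Nonempty S›
  have hL0 : 0 ≤ L := le_trans (hgap0 s0) (hLge s0)
  refine ⟨hL0, ?_⟩
  -- pointwise bias bound
  have key : ∀ s, |vstar s - vα s| ≤ γ * D + α * L := by
    intro s
    have hvαs : (1 - α) * Topt γ r P vα s + α * Tpol γ r P π0 vα s = vα s :=
      congrFun hvα s
    have hdec : vstar s - vα s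
        = (1 - α) * (Topt γ r P vstar s - Topt γ r P vα s)
          + α * ((vstar s - Tpol γ r P π0 vstar s)
            + (Tpol γ r P π0 vstar s - Tpol γ r P π0 vα s)) := by
      rw [← hvαs, ← hvstar s]; ring
    rw [abs_le]
    constructor
    · have h1 := hTopt2 s
      have h2 := (abs_le.mp (hTpol s)).1
      have h3 := hgap0 s
      have h4 := hLge s
      nlinarith [mul_nonneg hγ0 hD0]
    · have h1 := hTopt1 s
      have h2 := (abs_le.mp (hTpol s)).2
      have h4 := hLge s
      nlinarith [mul_nonneg hγ0 hD0]
  have hDle : D ≤ γ * D + α * L := by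
    rw [hD]
    apply pi_norm_le_iff_of_nonneg (by positivity) |>.mpr
    intro s
    simpa [Real.norm_eq_abs] using key s
  rw [le_div_iff₀ (by linarith : (0:ℝ) < 1 - γ)]
  nlinarith
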